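/- Fix y ∈ ℝ and define f : ℝ → ℝ by f(x) = −yx + log(1 + e^x). Then the Fenchel conjugate of f is f*(α) = (α + y)·log(α + y) + (1 − α − y)·log(1 − α − y) whenever 0 ≤ α + y ≤ 1 (with the convention 0·log 0 = 0), and f*(α) = +∞ otherwise. -/

import Mathlib

open Real

noncomputable section

/-- Fenchel conjugate of a real-valued function on `ℝ`. -/
def rconj (f : ℝ → ℝ) (a : ℝ) : EReal :=
  ⨆ x : ℝ, ((a * x - f x : ℝ) : EReal)

lemma isup_eq_top' (g : ℝ → ℝ) (h : ∀ M : ℝ, ∃ x, M < g x) :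
    (⨆ x : ℝ, ((g x : ℝ) : EReal)) = ⊤ := by
  refine eq_top_iff.mpr ?_
  rw [le_iSup_iff]
  intro b hb
  induction b with
  | bot => exact absurd (hb 0) (by simp)
  | coe r =>
    obtain ⟨x, hx⟩ := h r
    exact absurd (hb x) (not_le.mpr (EReal.coe_lt_coe_iff.mpr hx))
  | top => exact le_refl _

lemma isup_eq_of' (g : ℝ → ℝ) (C : ℝ) (hub : ∀ x, g x ≤ C)
    (hlb : ∀ ε : ℝ, 0 < ε → ∃ x, C - ε < g x) :
    (⨆ x : ℝ, ((g x : ℝ) : EReal)) = (C : EReal) := by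
  refine le_antisymm (iSup_le fun x => EReal.coe_le_coe_iff.mpr (hub x)) ?_
  rw [le_iSup_iff]
  intro b hb
  induction b with
  | bot => exact absurd (hb 0) (by simp)
  | coe r =>
    refine EReal.coe_le_coe_iff.mpr ?_
    by_contra hr
    push_neg at hr
    obtain ⟨x, hx⟩ := hlb (C - r) (by linarith)
    have := EReal.coe_le_coe_iff.mp (hb x)
    linarith
  | top => exact le_top

/-- the Fenchel conjugate of the logistic loss `f(x) = −yx + log(1 + eˣ)` is
`f*(α) = (α+y)·log(α+y) + (1−α−y)·log(1−α−y)` for `0 ≤ α + y ≤ 1` (with `0·log 0 = 0`),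
and `+∞` otherwise. -/
theorem stmt_10 (y : ℝ) (f : ℝ → ℝ)
    (hf : ∀ x, f x = -y * x + Real.log (1 + Real.exp x)) :
    ∀ α : ℝ,
      (0 ≤ α + y ∧ α + y ≤ 1 →
        rconj f α =
          (((α + y) * Real.log (α + y) + (1 - α - y) * Real.log (1 - α - y) : ℝ) : EReal)) ∧
      (¬ (0 ≤ α + y ∧ α + y ≤ 1) → rconj f α = ⊤) := by
  intro α
  set β := α + y with hβdef
  set g : ℝ → ℝ := fun x => β * x - Real.log (1 + Real.exp x) with hgdef
  have hpos : ∀ x : ℝ, (0:ℝ) < 1 + Real.exp x := fun x => by positivity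
  have hrc : rconj f α = ⨆ x : ℝ, ((g x : ℝ) : EReal) := by
    unfold rconj
    congr 1
    funext x
    have : α * x - f x = g x := by rw [hf]; simp [hgdef, hβdef]; ring
    rw [this]
  constructor
  · rintro ⟨h0, h1⟩
    have hrw : (1 - α - y) = 1 - β := by rw [hβdef]; ring
    rw [hrc, hrw]
    rcases h0.eq_or_lt with h0e | h0l
    · -- β = 0
      have hβ0 : β = 0 := h0e.symm
      rw [hβ0]
      norm_num
      apply isup_eq_of'
      · intro x
        simp only [hgdef, hβ0]
        have : (0:ℝ) ≤ Real.log (1 + Real.exp x) :=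
          Real.log_nonneg (by nlinarith [Real.exp_pos x])
        linarith
      · intro ε hε
        have h1e : (1:ℝ) < Real.exp ε := by
          rw [show (1:ℝ) = Real.exp 0 by simp]; exact Real.exp_lt_exp.mpr hε
        refine ⟨Real.log ((Real.exp ε - 1)/2), ?_⟩
        have ht : (0:ℝ) < (Real.exp ε - 1)/2 := by linarith
        simp only [hgdef, hβ0, Real.exp_log ht]
        have : Real.log (1 + (Real.exp ε - 1)/2) < ε := by
          have h3 := Real.log_lt_log (show (0:ℝ) < 1 + (Real.exp ε - 1)/2 by linarith)
            (show 1 + (Real.exp ε - 1)/2 < Real.exp ε by linarith)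
          rwa [Real.log_exp] at h3
        linarith
    · rcases h1.eq_or_lt with h1e | h1l
      · -- β = 1
        rw [h1e]
        norm_num
        apply isup_eq_of'
        · intro x
          simp only [hgdef, h1e, one_mul]
          have : x ≤ Real.log (1 + Real.exp x) := by
            calc x = Real.log (Real.exp x) := (Real.log_exp x).symm
            _ ≤ Real.log (1 + Real.exp x) :=
              Real.log_le_log (Real.exp_pos x) (by linarith)
          linarith
        · intro ε hε
          have h1e' : (1:ℝ) < Real.exp ε := by
            rw [show (1:ℝ) = Real.exp 0 by simp]; exact Real.exp_lt_exp.mpr hε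
          set t : ℝ := 2 / (Real.exp ε - 1) with htdef
          have ht : (0:ℝ) < t := div_pos two_pos (by linarith)
          refine ⟨Real.log t, ?_⟩
          simp only [hgdef, h1e, one_mul, Real.exp_log ht]
          have h2 : (Real.exp ε - 1) * t = 2 := by
            rw [htdef, mul_comm]
            exact div_mul_cancel₀ 2 (by linarith)
          have key : 1 + t < Real.exp ε * t := by nlinarith
          have : Real.log (1 + t) < ε + Real.log t := by
            calc Real.log (1 + t) < Real.log (Real.exp ε * t) :=
              Real.log_lt_log (by linarith) key
            _ = ε + Real.log t := by
              rw [Real.log_mul (by positivity) (ne_of_gt ht), Real.log_exp]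
          linarith
      · -- 0 < β < 1
        have h1β : (0:ℝ) < 1 - β := by linarith
        apply isup_eq_of'
        · intro x
          simp only [hgdef]
          have hamgm := Real.geom_mean_le_arith_mean2_weighted
            (le_of_lt h0l) (le_of_lt h1β)
            (le_of_lt (div_pos (Real.exp_pos x) h0l))
            (le_of_lt (inv_pos.mpr h1β))
            (by ring)
          have hrhs : β * (Real.exp x / β) + (1-β) * (1-β)⁻¹ = Real.exp x + 1 := by
            field_simp
          rw [hrhs] at hamgm
          have hlhspos : (0:ℝ) < (Real.exp x / β) ^ β * ((1-β)⁻¹) ^ (1-β) :=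
            mul_pos (Real.rpow_pos_of_pos (div_pos (Real.exp_pos x) h0l) _)
              (Real.rpow_pos_of_pos (inv_pos.mpr h1β) _)
          have hlog := Real.log_le_log hlhspos hamgm
          rw [Real.log_mul (ne_of_gt (Real.rpow_pos_of_pos (div_pos (Real.exp_pos x) h0l) _))
              (ne_of_gt (Real.rpow_pos_of_pos (inv_pos.mpr h1β) _)),
            Real.log_rpow (div_pos (Real.exp_pos x) h0l), Real.log_rpow (inv_pos.mpr h1β),
            Real.log_div (ne_of_gt (Real.exp_pos x)) (ne_of_gt h0l),
            Real.log_exp, Real.log_inv] at hlog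
          have : Real.log (Real.exp x + 1) = Real.log (1 + Real.exp x) := by ring_nf
          rw [this] at hlog
          nlinarith
        · intro ε hε
          have hq : (0:ℝ) < β / (1 - β) := by positivity
          refine ⟨Real.log (β / (1-β)), ?_⟩
          have hval : g (Real.log (β / (1-β)))
              = β * Real.log β + (1-β) * Real.log (1-β) := by
            simp only [hgdef, Real.exp_log hq]
            have h2 : 1 + β/(1-β) = (1-β)⁻¹ := by field_simp; ring
            rw [h2, Real.log_inv,
              Real.log_div (ne_of_gt h0l) (ne_of_gt h1β)]
            ring
          rw [hval]
          linarith
  · intro hn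
    rw [hrc]
    rcases not_and_or.mp hn with h | h
    · push_neg at h
      apply isup_eq_top'
      intro M
      refine ⟨min 0 ((M+1)/β - 1), ?_⟩
      set x := min 0 ((M+1)/β - 1) with hx
      have hx0 : x ≤ 0 := min_le_left _ _
      have hx1 : x ≤ (M+1)/β - 1 := min_le_right _ _
      have hlogle : Real.log (1 + Real.exp x) ≤ 1 := by
        have h1 : Real.log (1 + Real.exp x) ≤ (1 + Real.exp x) - 1 :=
          Real.log_le_sub_one_of_pos (hpos x)
        have h2 : Real.exp x ≤ 1 := by
          calc Real.exp x ≤ Real.exp 0 := Real.exp_le_exp.mpr hx0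
          _ = 1 := Real.exp_zero
        linarith
      have hmul : β * ((M+1)/β - 1) ≤ β * x :=
        mul_le_mul_of_nonpos_left hx1 (le_of_lt h)
      have hcan : β * ((M+1)/β - 1) = M + 1 - β := by
        have hne : β ≠ 0 := ne_of_lt h
        field_simp
      show M < β * x - Real.log (1 + Real.exp x)
      nlinarith
    · push_neg at h
      apply isup_eq_top'
      intro M
      have hb1 : (0:ℝ) < β - 1 := by linarith
      refine ⟨max 0 ((M + Real.log 2)/(β-1) + 1), ?_⟩
      set x := max 0 ((M + Real.log 2)/(β-1) + 1) with hx
      have hx0 : 0 ≤ x := le_max_left _ _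
      have hx1 : (M + Real.log 2)/(β-1) + 1 ≤ x := le_max_right _ _
      have hexp1 : (1:ℝ) ≤ Real.exp x := by
        calc (1:ℝ) = Real.exp 0 := Real.exp_zero.symm
        _ ≤ Real.exp x := Real.exp_le_exp.mpr hx0
      have hlogle : Real.log (1 + Real.exp x) ≤ Real.log 2 + x := by
        calc Real.log (1 + Real.exp x) ≤ Real.log (2 * Real.exp x) :=
          Real.log_le_log (hpos x) (by linarith)
        _ = Real.log 2 + x := by
          rw [Real.log_mul (by norm_num) (ne_of_gt (Real.exp_pos x)), Real.log_exp]
      have hmul : (β-1) * ((M + Real.log 2)/(β-1) + 1) ≤ (β-1) * x :=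
        mul_le_mul_of_nonneg_left hx1 (le_of_lt hb1)
      have hcan : (β-1) * ((M + Real.log 2)/(β-1) + 1) = M + Real.log 2 + (β-1) := by
        have hne : β - 1 ≠ 0 := ne_of_gt hb1
        field_simp
      show M < β * x - Real.log (1 + Real.exp x)
      nlinarith

end
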